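/- Let C be a reduced plane curve with r > 1 branches C₁,...,Cᵣ and D a branch. Then d(C,D) ≤ (C,D)₀ / (m(C)·m(D)), with equality whenever d(C,D) < min_{i≠j} d(Cᵢ,Cⱼ). -/

import Mathlib

open ENNReal

/-- An abstract system of plane branches: each branch has a multiplicity and any
two branches have an intersection number (infinite exactly for equal branches). -/
structure BranchSystem where
  Branch : Type
  /-- intersection number `(a,b)₀` -/
  im : Branch → Branch → ℝ≥0∞
  /-- multiplicity `m(b)` -/
  mult : Branch → ℕ
  mult_pos : ∀ b, 0 < mult b
  im_symm : ∀ a b, im a b = im b a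
  im_top_iff : ∀ a b, im a b = ⊤ ↔ a = b
  im_ge : ∀ a b, (mult a : ℝ≥0∞) * (mult b : ℝ≥0∞) ≤ im a b

namespace BranchSystem

variable (S : BranchSystem)

/-- The order of contact `d(a,b) = (a,b)₀ / (m(a)m(b))` of two branches. -/
noncomputable def d (a b : S.Branch) : ℝ≥0∞ :=
  S.im a b / ((S.mult a : ℝ≥0∞) * (S.mult b : ℝ≥0∞))

/-- A branch is smooth iff its multiplicity is `1`. -/
def Smooth (b : S.Branch) : Prop := S.mult b = 1

/-- Contact of a curve with branches `C i` with a branch `W`: `min_i d(Cᵢ,W)`. -/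
noncomputable def dC {r : ℕ} (C : Fin r → S.Branch) (W : S.Branch) : ℝ≥0∞ :=
  ⨅ i, S.d (C i) W

/-- Contact exponent of a curve: `sup` of contacts with smooth branches. -/
noncomputable def dExpC {r : ℕ} (C : Fin r → S.Branch) : ℝ≥0∞ :=
  ⨆ W, ⨆ _ : S.Smooth W, S.dC C W

/-- Contact exponent of a single branch. -/
noncomputable def dExp (b : S.Branch) : ℝ≥0∞ :=
  ⨆ W, ⨆ _ : S.Smooth W, S.d b W

/-- `d` is a log-distance (ultrametric inequality). -/
def Ultra : Prop := ∀ a b e, min (S.d a e) (S.d e b) ≤ S.d a b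

/-- Multiplicity `m(C) = Σᵢ m(Cᵢ)` of a curve. -/
def multC {r : ℕ} (C : Fin r → S.Branch) : ℕ := ∑ i, S.mult (C i)

/-- Intersection number `(C,W)₀ = Σᵢ (Cᵢ,W)₀` of a curve with a branch. -/
noncomputable def imC {r : ℕ} (C : Fin r → S.Branch) (W : S.Branch) : ℝ≥0∞ :=
  ∑ i, S.im (C i) W

/-- Milnor number of a curve with branches `C i`, via
`μ(C) + r − 1 = Σᵢ μ(Cᵢ) + 2 Σ_{i<j} (Cᵢ,Cⱼ)₀`, where `μb` gives the Milnor
numbers (conductors of the semigroups) of the individual branches. -/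
noncomputable def muC (μb : S.Branch → ℕ) {r : ℕ} (C : Fin r → S.Branch) : ℝ≥0∞ :=
  (∑ i, (μb (C i) : ℝ≥0∞)) + (∑ i, ∑ j, if i ≠ j then S.im (C i) (C j) else 0)
    - ((r : ℝ≥0∞) - 1)

end BranchSystem

open BranchSystem

/-- Lemma 3.1: for a curve `C` with `r > 1` branches and a branch `D`,
`d(C,D) ≤ (C,D)₀/(m(C)m(D))`, with equality whenever
`d(C,D) < min_{i≠j} d(Cᵢ,Cⱼ)`. -/
theorem dC_le_imC_div (S : BranchSystem) (hU : S.Ultra)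
    {r : ℕ} (hr : 1 < r) (C : Fin r → S.Branch) (hC : Function.Injective C)
    (D : S.Branch) :
    S.dC C D ≤ S.imC C D / ((S.multC C : ℝ≥0∞) * (S.mult D : ℝ≥0∞)) ∧
      (S.dC C D < (⨅ (i) (j) (_ : i ≠ j), S.d (C i) (C j)) →
        S.dC C D = S.imC C D / ((S.multC C : ℝ≥0∞) * (S.mult D : ℝ≥0∞))) := by
  have hrpos : 0 < r := lt_trans one_pos hr
  haveI : NeZero r := ⟨hrpos.ne'⟩
  -- basic facts about multiplicities
  have hm0 : ∀ b : S.Branch, ((S.mult b : ℝ≥0∞)) ≠ 0 := by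
    intro b
    exact_mod_cast (S.mult_pos b).ne'
  have hmtop : ∀ b : S.Branch, ((S.mult b : ℝ≥0∞)) ≠ ⊤ := fun b => ENNReal.natCast_ne_top _
  have hmm0 : ∀ a b : S.Branch, ((S.mult a : ℝ≥0∞) * (S.mult b : ℝ≥0∞)) ≠ 0 :=
    fun a b => mul_ne_zero (hm0 a) (hm0 b)
  have hmmtop : ∀ a b : S.Branch, ((S.mult a : ℝ≥0∞) * (S.mult b : ℝ≥0∞)) ≠ ⊤ :=
    fun a b => ENNReal.mul_ne_top (hmtop a) (hmtop b)
  -- im = (m a * m b) * d a b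
  have him : ∀ a b : S.Branch,
      S.im a b = ((S.mult a : ℝ≥0∞) * (S.mult b : ℝ≥0∞)) * S.d a b := by
    intro a b
    rw [d, ENNReal.mul_div_cancel (hmm0 a b) (hmmtop a b)]
  -- multC cast
  have hmultC : ((S.multC C : ℝ≥0∞)) = ∑ i, (S.mult (C i) : ℝ≥0∞) := by
    simp [multC]
  have hK0 : ((S.multC C : ℝ≥0∞) * (S.mult D : ℝ≥0∞)) ≠ 0 := by
    refine mul_ne_zero ?_ (hm0 D)
    have : 0 < S.multC C := by
      have := S.mult_pos (C ⟨0, hrpos⟩)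
      calc 0 < S.mult (C ⟨0, hrpos⟩) := this
        _ ≤ ∑ i, S.mult (C i) := Finset.single_le_sum (f := fun i => S.mult (C i)) (fun _ _ => Nat.zero_le _) (Finset.mem_univ _)
    exact_mod_cast this.ne'
  have hKtop : ((S.multC C : ℝ≥0∞) * (S.mult D : ℝ≥0∞)) ≠ ⊤ :=
    ENNReal.mul_ne_top (ENNReal.natCast_ne_top _) (ENNReal.natCast_ne_top _)
  have hdCle : ∀ i, S.dC C D ≤ S.d (C i) D := fun i => iInf_le _ i
  constructor
  · -- inequality
    rw [ENNReal.le_div_iff_mul_le (Or.inl hK0) (Or.inl hKtop)]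
    have : S.dC C D * ((S.multC C : ℝ≥0∞) * (S.mult D : ℝ≥0∞))
        = ∑ i, ((S.mult (C i) : ℝ≥0∞) * (S.mult D : ℝ≥0∞)) * S.dC C D := by
      rw [hmultC, Finset.sum_mul, Finset.mul_sum]
      congr 1; ext i; ring
    rw [this, imC]
    refine Finset.sum_le_sum fun i _ => ?_
    rw [him (C i) D]
    exact mul_le_mul_right (hdCle i) _
  · -- equality case
    intro hlt
    -- the infimum is attained
    obtain ⟨i₀, hi₀⟩ := Finite.exists_min fun i => S.d (C i) D
    have hdC : S.dC C D = S.d (C i₀) D :=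
      le_antisymm (hdCle i₀) (le_iInf hi₀)
    -- all contacts equal dC
    have hall : ∀ j, S.d (C j) D = S.dC C D := by
      intro j
      refine le_antisymm ?_ (hdCle j)
      by_cases hji : j = i₀
      · rw [hji, ← hdC]
      · have h1 : S.dC C D < S.d (C i₀) (C j) := by
          refine lt_of_lt_of_le hlt ?_
          exact iInf_le_of_le i₀ (iInf_le_of_le j (iInf_le _ (fun h => hji (h.symm))))
        have h2 := hU (C i₀) D (C j)
        -- min (d (C i₀) (C j)) (d (C j) D) ≤ d (C i₀) D = dC
        rw [← hdC] at h2
        rcases min_le_iff.mp h2 with h | h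
        · exact absurd h (not_le.mpr h1)
        · exact h
    -- compute imC
    have himC : S.imC C D = ((S.multC C : ℝ≥0∞) * (S.mult D : ℝ≥0∞)) * S.dC C D := by
      rw [imC]
      have : ∀ i ∈ Finset.univ, S.im (C i) D
          = ((S.mult (C i) : ℝ≥0∞) * (S.mult D : ℝ≥0∞)) * S.dC C D := by
        intro i _
        rw [him (C i) D, hall i]
      rw [Finset.sum_congr rfl this, hmultC, Finset.sum_mul, Finset.sum_mul]
    rw [himC]
    exact (ENNReal.eq_div_iff hK0 hKtop).mpr rfl
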